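/- Let L > 0 and let Λ_1,…,Λ_N : ℝ → ℝ be continuously differentiable functions forming a partition of unity: ∑_{i=1}^N Λ_i(x) = 1 for all x ∈ ℝ. Let φ ∈ ℝ^N and set φ_h = ∑_{i=1}^N φ_i·Λ_i. Fix quadrature points x̂_j ∈ ℝ and weights ŵ_j (j = 1,…,N_q), particle positions x_k ∈ ℝ and weights w_k (k = 1,…,N_p), Z ∈ ℝ, and functions n₀, T : ℝ → ℝ with T > 0 at all quadrature points. Suppose the finite-element discrete Poisson–Boltzmann equation holds for every i = 1,…,N: ∫₀ᴸ φ_h'(x)·Λ_i'(x) dx + ∑_{j=1}^{N_q} ŵ_j·n₀(x̂_j)·exp(φ_h(x̂_j)/T(x̂_j))·Λ_i(x̂_j) = Z·∑_{k=1}^{N_p} w_k·Λ_i(x_k). Then the weak neutrality condition holds: ∑_{j=1}^{N_q} ŵ_j·n₀(x̂_j)·exp(φ_h(x̂_j)/T(x̂_j)) = Z·∑_{k=1}^{N_p} w_k. -/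

import Mathlib

open BigOperators

/-- for the finite-element/particle discretization of the Poisson–Boltzmann
equation with basis functions forming a partition of unity, summing the discrete equations
over the basis index yields the weak neutrality condition. -/
theorem fem_weak_neutrality (L : ℝ) (hL : 0 < L) (N Nq Np : ℕ)
    (Λ : Fin N → ℝ → ℝ) (hΛ : ∀ i, ContDiff ℝ 1 (Λ i))
    (hPU : ∀ x : ℝ, ∑ i, Λ i x = 1)
    (φ : Fin N → ℝ) (φh : ℝ → ℝ) (hφh : ∀ x, φh x = ∑ i, φ i * Λ i x)
    (xq wq : Fin Nq → ℝ) (xp w : Fin Np → ℝ) (Z : ℝ)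
    (n0 T : ℝ → ℝ) (hT : ∀ j, 0 < T (xq j))
    (heq : ∀ i, (∫ x in (0:ℝ)..L, deriv φh x * deriv (Λ i) x)
        + ∑ j, wq j * n0 (xq j) * Real.exp (φh (xq j) / T (xq j)) * Λ i (xq j)
        = Z * ∑ k, w k * Λ i (xp k)) :
    ∑ j, wq j * n0 (xq j) * Real.exp (φh (xq j) / T (xq j)) = Z * ∑ k, w k := by
  have hdiff : ∀ i, Differentiable ℝ (Λ i) := fun i =>
    (hΛ i).differentiable one_ne_zero
  -- sum of derivatives is zero
  have hderivsum : ∀ x : ℝ, ∑ i, deriv (Λ i) x = 0 := by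
    intro x
    have h1 : HasDerivAt (fun y => ∑ i, Λ i y) (∑ i, deriv (Λ i) x) x :=
      HasDerivAt.fun_sum fun i _ => (hdiff i x).hasDerivAt
    have h2 : HasDerivAt (fun y => ∑ i, Λ i y) 0 x := by
      have : (fun y : ℝ => ∑ i, Λ i y) = fun _ => (1 : ℝ) := funext hPU
      rw [this]; exact hasDerivAt_const x 1
    exact h1.unique h2
  -- continuity of deriv Λ i and deriv φh
  have hcontd : ∀ i, Continuous (deriv (Λ i)) := fun i =>
    ((hΛ i).continuous_deriv le_rfl)
  have hφhdiff : Differentiable ℝ φh := by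
    have : φh = fun x => ∑ i, φ i * Λ i x := funext hφh
    rw [this]
    exact Differentiable.fun_sum fun i _ => (hdiff i).const_mul _
  have hφhderiv_cont : Continuous (deriv φh) := by
    have hφheq : φh = fun x => ∑ i, φ i * Λ i x := funext hφh
    have : deriv φh = fun x => ∑ i, φ i * deriv (Λ i) x := by
      funext x
      rw [hφheq]
      rw [deriv_fun_sum fun i _ => ((hdiff i x).const_mul _)]
      congr 1; funext i
      exact deriv_const_mul _ (hdiff i x)
    rw [this]
    exact continuous_finset_sum _ fun i _ => continuous_const.mul (hcontd i)
  -- sum the equations over i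
  have hsum := Finset.sum_congr rfl (fun i (_ : i ∈ Finset.univ) => heq i)
  rw [Finset.sum_add_distrib] at hsum
  -- integral term sums to zero
  have hint : ∑ i, (∫ x in (0:ℝ)..L, deriv φh x * deriv (Λ i) x) = 0 := by
    rw [← intervalIntegral.integral_finset_sum]
    · have : ∀ x, ∑ i, deriv φh x * deriv (Λ i) x = 0 := by
        intro x
        rw [← Finset.mul_sum, hderivsum, mul_zero]
      simp only [this, intervalIntegral.integral_zero]
    · intro i _
      exact (hφhderiv_cont.mul (hcontd i)).intervalIntegrable _ _
  rw [hint, zero_add, Finset.sum_comm] at hsum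
  have hL2 : ∀ j, ∑ i, wq j * n0 (xq j) * Real.exp (φh (xq j) / T (xq j)) * Λ i (xq j)
      = wq j * n0 (xq j) * Real.exp (φh (xq j) / T (xq j)) := by
    intro j
    rw [← Finset.mul_sum, hPU, mul_one]
  simp only [hL2] at hsum
  rw [hsum, ← Finset.mul_sum, Finset.sum_comm]
  congr 1
  apply Finset.sum_congr rfl
  intro k _
  rw [← Finset.mul_sum, hPU, mul_one]
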